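/- Let m = 2^p, let g : [m] → [n], let ℓ ≥ 1 be an integer, and set k = ℓ + p. Define the addressing function f : {0,1}^n × {0,1}^p → {−1,1} by f(y, z) = (−1)^{y_{g(z)}}, where z ∈ {0,1}^p is identified with an element of [m]. Then: (i) if the image of g has size at most ℓ, then f is a k-junta (on n + p variables); and (ii) if g is ε-far from any function with an image of size at most ℓ, then f is (ε′/2)-far from any k-junta, where ε′ = ε − p/k. -/

import Mathlib

open scoped Classical

/-- `h : {0,1}^I → ℝ` is a `k`-junta if it depends on at most `k` coordinates. -/
def IsJunta {I : Type} [Fintype I] (h : (I → Bool) → ℝ) (k : ℕ) : Prop :=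
  ∃ W : Finset I, W.card ≤ k ∧ ∀ x y : I → Bool, (∀ i ∈ W, x i = y i) → h x = h y

/-- The addressing function of `g : [m] → [n]` (with `m = 2^p`, an address `z ∈ {0,1}^p`
identified with an element of `[m]`): `f(y,z) = (-1)^{y_{g(z)}}`, on `n + p` variables
(the `Fin n` summand holds the addressed variables `y`, the `Fin p` summand the address
variables `z`). -/
noncomputable def addrFun (n p : ℕ) (g : (Fin p → Bool) → Fin n) :
    ((Fin n ⊕ Fin p) → Bool) → ℝ :=
  fun x => if x (Sum.inl (g (fun i => x (Sum.inr i)))) then -1 else 1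

lemma select_aux {α : Type} [DecidableEq α] (c : α → ℕ) :
    ∀ (l : ℕ) (J : Finset α), l ≤ J.card →
      ∃ J' : Finset α, J' ⊆ J ∧ J'.card = l ∧
        l * (∑ a ∈ J, c a) ≤ J.card * (∑ a ∈ J', c a) := by
  intro l
  induction l with
  | zero => intro J _; exact ⟨∅, Finset.empty_subset _, rfl, by simp⟩
  | succ l ih =>
    intro J hJ
    rcases eq_or_lt_of_le hJ with heq | hlt
    · exact ⟨J, Finset.Subset.refl _, heq.symm, by rw [heq]⟩
    · have hne : J.Nonempty := Finset.card_pos.mp (by omega)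
      obtain ⟨a, haJ, hmax⟩ := Finset.exists_max_image J c hne
      have hcard : l ≤ (J.erase a).card := by
        rw [Finset.card_erase_of_mem haJ]; omega
      obtain ⟨J'', hsub, hc'', hineq⟩ := ih (J.erase a) hcard
      have haJ'' : a ∉ J'' := fun h => (Finset.mem_erase.mp (hsub h)).1 rfl
      refine ⟨insert a J'', ?_, ?_, ?_⟩
      · intro x hx
        rcases Finset.mem_insert.mp hx with rfl | hx
        · exact haJ
        · exact Finset.mem_of_mem_erase (hsub hx)
      · rw [Finset.card_insert_of_notMem haJ'', hc'']
      · have hsum : c a + ∑ x ∈ J.erase a, c x = ∑ x ∈ J, c x :=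
          Finset.add_sum_erase J c haJ
        have hsum' : ∑ x ∈ insert a J'', c x = c a + ∑ x ∈ J'', c x :=
          Finset.sum_insert haJ''
        have hmaxsum : ∑ x ∈ J, c x ≤ J.card * c a :=
          Finset.sum_le_card_nsmul J c (c a) (fun b hb => hmax b hb)
        have hje : (J.erase a).card + 1 = J.card := by
          rw [Finset.card_erase_of_mem haJ]; omega
        set j := (J.erase a).card with hjdef
        set T'' := ∑ x ∈ J.erase a, c x with hT
        set S'' := ∑ x ∈ J'', c x with hS
        rw [hsum', ← hsum, ← hje]
        have hj : l + 1 ≤ j := by omega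
        have hT''le : T'' ≤ j * c a := by nlinarith [hmaxsum, hsum, hje]
        have key : j * ((l+1) * (c a + T'')) ≤ j * ((j+1) * (c a + S'')) := by
          nlinarith [mul_le_mul_of_nonneg_left hineq (Nat.zero_le (j+1)), hT''le, hj,
            Nat.mul_le_mul_left (c a) hj]
        exact Nat.le_of_mul_le_mul_left key (by omega)

theorem stmt13 (n p ℓ : ℕ) (hℓ : 1 ≤ ℓ) (ε : ℝ) (g : (Fin p → Bool) → Fin n) :
    -- (i) if the image of g has size at most ℓ, then f is a (ℓ + p)-junta
    ((Finset.univ.image g).card ≤ ℓ → IsJunta (addrFun n p g) (ℓ + p)) ∧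
    -- (ii) if g is ε-far from any function with image of size at most ℓ,
    -- then f is (ε'/2)-far from any (ℓ + p)-junta, where ε' = ε - p/(ℓ + p)
    ((∀ h : (Fin p → Bool) → Fin n, (Finset.univ.image h).card ≤ ℓ →
        ε * 2^p ≤ ((Finset.univ.filter (fun z : Fin p → Bool => g z ≠ h z)).card : ℝ)) →
      ∀ h : ((Fin n ⊕ Fin p) → Bool) → ℝ, (∀ x, h x = 1 ∨ h x = -1) →
        IsJunta h (ℓ + p) →
        ((ε - (p:ℝ) / ((ℓ:ℝ) + p)) / 2) * 2^(n + p)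
          ≤ ((Finset.univ.filter
                (fun x : (Fin n ⊕ Fin p) → Bool => addrFun n p g x ≠ h x)).card : ℝ)) := by
  constructor
  · -- part (i)
    intro himg
    refine ⟨((Finset.univ.image g).image Sum.inl) ∪ (Finset.univ.image Sum.inr), ?_, ?_⟩
    · refine le_trans (Finset.card_union_le _ _) ?_
      have h1 : ((Finset.univ.image g).image (Sum.inl : Fin n → Fin n ⊕ Fin p)).card ≤ ℓ :=
        le_trans Finset.card_image_le himg
      have h2 : ((Finset.univ.image (Sum.inr : Fin p → Fin n ⊕ Fin p)).card) ≤ p := by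
        refine le_trans Finset.card_image_le ?_
        simp
      omega
    · intro x y hxy
      have hz : (fun i => x (Sum.inr i)) = (fun i => y (Sum.inr i)) := by
        funext i
        exact hxy _ (Finset.mem_union_right _ (Finset.mem_image_of_mem _ (Finset.mem_univ i)))
      have hgl : x (Sum.inl (g fun i => y (Sum.inr i))) = y (Sum.inl (g fun i => y (Sum.inr i))) :=
        hxy _ (Finset.mem_union_left _ (Finset.mem_image_of_mem _
          (Finset.mem_image_of_mem _ (Finset.mem_univ _))))
      simp only [addrFun, hz, hgl]
  · intro hfar h hpm hjunta
    obtain ⟨W, hWcard, hW⟩ := hjunta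
    classical
    set J : Finset (Fin n) := Finset.univ.filter (fun a => Sum.inl a ∈ W) with hJdef
    have hJcard : J.card ≤ ℓ + p := by
      have hsub : J.image (Sum.inl : Fin n → Fin n ⊕ Fin p) ⊆ W := by
        intro i hi
        obtain ⟨a, ha, rfl⟩ := Finset.mem_image.mp hi
        exact (Finset.mem_filter.mp ha).2
      calc J.card = (J.image (Sum.inl : Fin n → Fin n ⊕ Fin p)).card :=
            (Finset.card_image_of_injective _ Sum.inl_injective).symm
        _ ≤ W.card := Finset.card_le_card hsub
        _ ≤ ℓ + p := hWcard
    set c : Fin n → ℕ := fun a => (Finset.univ.filter (fun z : Fin p → Bool => g z = a)).card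
      with hcdef
    have htot : ∑ a : Fin n, c a = 2 ^ p := by
      have := Finset.card_eq_sum_card_fiberwise
        (f := g) (s := (Finset.univ : Finset (Fin p → Bool))) (t := Finset.univ)
        (fun z _ => Finset.mem_univ (g z))
      rw [Finset.card_univ] at this
      rw [← this]
      simp [Fintype.card_fun]
    -- choose J'
    obtain ⟨J', hJ'sub, hJ'card, hMbound⟩ :
        ∃ J' : Finset (Fin n), J' ⊆ J ∧ J'.card ≤ ℓ ∧
          ((∑ a ∈ J \ J', c a : ℕ) : ℝ) * ((ℓ:ℝ) + p) ≤ p * 2 ^ p := by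
      by_cases hc : ℓ ≤ J.card
      · obtain ⟨J', h1, h2, h3⟩ := select_aux c ℓ J hc
        refine ⟨J', h1, le_of_eq h2, ?_⟩
        have hsd : ∑ a ∈ J \ J', c a + ∑ a ∈ J', c a = ∑ a ∈ J, c a := Finset.sum_sdiff h1
        have hTle : ∑ a ∈ J, c a ≤ 2 ^ p := by
          rw [← htot]; exact Finset.sum_le_sum_of_subset (Finset.subset_univ J)
        have hj1 : 1 ≤ J.card := le_trans hℓ hc
        have h3' : (ℓ:ℝ) * (∑ a ∈ J, c a : ℕ) ≤ (J.card : ℝ) * (∑ a ∈ J', c a : ℕ) := by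
          exact_mod_cast h3
        have hsd' : ((∑ a ∈ J \ J', c a : ℕ) : ℝ) + (∑ a ∈ J', c a : ℕ) = (∑ a ∈ J, c a : ℕ) := by
          exact_mod_cast hsd
        have hTle' : ((∑ a ∈ J, c a : ℕ) : ℝ) ≤ 2 ^ p := by exact_mod_cast hTle
        have hjk : (J.card : ℝ) ≤ (ℓ:ℝ) + p := by exact_mod_cast hJcard
        have hℓj : (ℓ:ℝ) ≤ (J.card : ℝ) := by exact_mod_cast hc
        have hj1' : (1:ℝ) ≤ (J.card : ℝ) := by exact_mod_cast hj1
        set T : ℝ := ((∑ a ∈ J, c a : ℕ) : ℝ)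
        set S' : ℝ := ((∑ a ∈ J', c a : ℕ) : ℝ)
        set M : ℝ := ((∑ a ∈ J \ J', c a : ℕ) : ℝ)
        set j : ℝ := (J.card : ℝ)
        have hMTS : M = T - S' := by linarith
        have key : j * (M * ((ℓ:ℝ) + p)) ≤ j * ((p:ℝ) * 2 ^ p) := by
          rw [hMTS]
          nlinarith [mul_le_mul_of_nonneg_left h3' (by positivity : (0:ℝ) ≤ (ℓ:ℝ) + p),
            mul_nonneg (mul_nonneg (by positivity : (0:ℝ) ≤ (ℓ:ℝ) + p)
              (sub_nonneg.mpr hℓj)) (sub_nonneg.mpr hTle'),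
            mul_nonneg (mul_nonneg (by positivity : (0:ℝ) ≤ (2:ℝ)^p)
              (by positivity : (0:ℝ) ≤ (ℓ:ℝ))) (sub_nonneg.mpr hjk)]
        exact le_of_mul_le_mul_left key (by linarith)
      · refine ⟨J, Finset.Subset.refl _, le_of_lt (not_le.mp hc), ?_⟩
        rw [Finset.sdiff_self]
        simp
    -- middle count
    have hMcard : ((Finset.univ.filter (fun z : Fin p → Bool => g z ∈ J \ J')).card)
        = ∑ a ∈ J \ J', c a := by
      rw [Finset.card_eq_sum_card_fiberwise
        (f := g) (s := Finset.univ.filter (fun z : Fin p → Bool => g z ∈ J \ J')) (t := J \ J')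
        (fun z hz => Finset.mem_coe.mpr (Finset.mem_filter.mp hz).2)]
      refine Finset.sum_congr rfl (fun a ha => ?_)
      congr 1
      ext z
      simp only [Finset.mem_filter, Finset.mem_univ, true_and]
      constructor
      · rintro ⟨_, h⟩; exact h
      · intro h; exact ⟨h ▸ ha, h⟩
    -- h'
    set b₀ : Fin n := if hne : J'.Nonempty then hne.choose else g (fun _ => false) with hb₀
    have hb₀J' : J'.Nonempty → b₀ ∈ J' := by
      intro hne; rw [hb₀, dif_pos hne]; exact hne.choose_spec
    set h' : (Fin p → Bool) → Fin n := fun z => if g z ∈ J' then g z else b₀ with hh'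
    have himg' : (Finset.univ.image h').card ≤ ℓ := by
      by_cases hne : J'.Nonempty
      · refine le_trans (Finset.card_le_card ?_) hJ'card
        intro a ha
        obtain ⟨z, _, rfl⟩ := Finset.mem_image.mp ha
        rw [hh']
        dsimp only
        split
        · assumption
        · exact hb₀J' hne
      · have hsub : Finset.univ.image h' ⊆ {b₀} := by
          intro a ha
          obtain ⟨z, _, rfl⟩ := Finset.mem_image.mp ha
          rw [hh']
          dsimp only
          rw [if_neg (fun hmem => hne ⟨_, hmem⟩)]
          exact Finset.mem_singleton_self _
        exact le_trans (Finset.card_le_card hsub) (by simpa using hℓ)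
    have hfar' := hfar h' himg'
    set B : Finset (Fin p → Bool) :=
      Finset.univ.filter (fun z => Sum.inl (g z) ∉ W) with hB
    have hsubset : Finset.univ.filter (fun z : Fin p → Bool => g z ≠ h' z) ⊆
        B ∪ Finset.univ.filter (fun z : Fin p → Bool => g z ∈ J \ J') := by
      intro z hz
      rw [Finset.mem_filter] at hz
      rw [Finset.mem_union, Finset.mem_filter, Finset.mem_filter]
      by_cases hgz : g z ∈ J'
      · exact absurd (show g z = h' z by rw [hh']; simp [hgz]) hz.2
      · by_cases hgJ : g z ∈ J
        · exact Or.inr ⟨Finset.mem_univ _, Finset.mem_sdiff.mpr ⟨hgJ, hgz⟩⟩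
        · refine Or.inl ⟨Finset.mem_univ _, fun hmem => ?_⟩
          exact hgJ (by rw [hJdef]; exact Finset.mem_filter.mpr ⟨Finset.mem_univ _, hmem⟩)
    have hchain : ε * 2 ^ p ≤ (B.card : ℝ) + ((∑ a ∈ J \ J', c a : ℕ) : ℝ) := by
      refine le_trans hfar' ?_
      have h1 := Finset.card_le_card hsubset
      have h2 := Finset.card_union_le B (Finset.univ.filter (fun z : Fin p → Bool => g z ∈ J \ J'))
      rw [hMcard] at h2
      exact_mod_cast le_trans h1 h2
    -- the big-cube counting
    set S : Finset ((Fin n ⊕ Fin p) → Bool) :=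
      Finset.univ.filter (fun x => Sum.inl (g (fun i => x (Sum.inr i))) ∉ W) with hSdef
    have hScard : S.card = 2 ^ n * B.card := by
      have hEq : S.card = ((Finset.univ : Finset ((Fin n → Bool) × (Fin p → Bool))).filter
          (fun q => Sum.inl (g q.2) ∉ W)).card := by
        refine Finset.card_equiv (Equiv.sumArrowEquivProdArrow (Fin n) (Fin p) Bool) (fun x => ?_)
        simp [hSdef, Equiv.sumArrowEquivProdArrow, Function.comp_def]
      rw [hEq]
      have hprod : ((Finset.univ : Finset ((Fin n → Bool) × (Fin p → Bool))).filter
          (fun q => Sum.inl (g q.2) ∉ W)) = Finset.univ ×ˢ B := by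
        ext ⟨y, z⟩
        simp [hB, Finset.mem_product]
      rw [hprod, Finset.card_product, Finset.card_univ]
      simp [Fintype.card_fun]
    -- the involution
    set σ : ((Fin n ⊕ Fin p) → Bool) → ((Fin n ⊕ Fin p) → Bool) :=
      fun x i => if i = Sum.inl (g (fun j => x (Sum.inr j))) then !(x i) else x i with hσ
    have hσinr : ∀ x, (fun j => σ x (Sum.inr j)) = (fun j => x (Sum.inr j)) := by
      intro x; funext j; simp [hσ]
    have hσσ : ∀ x, σ (σ x) = x := by
      intro x; funext i
      by_cases hi : i = Sum.inl (g fun j => x (Sum.inr j))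
      · simp [hσ, hi]
      · simp [hσ, hi]
    have hσflip : ∀ x, addrFun n p g (σ x) ≠ addrFun n p g x := by
      intro x
      unfold addrFun
      rw [hσinr]
      have : σ x (Sum.inl (g fun i => x (Sum.inr i))) =
          !(x (Sum.inl (g fun i => x (Sum.inr i)))) := by
        rw [hσ]; simp
      rw [this]
      by_cases hb : x (Sum.inl (g fun i => x (Sum.inr i))) <;> simp [hb] <;> norm_num
    have hσW : ∀ x ∈ S, h (σ x) = h x := by
      intro x hx
      refine hW _ _ (fun i hi => ?_)
      have hnW : Sum.inl (g fun j => x (Sum.inr j)) ∉ W := (Finset.mem_filter.mp hx).2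
      rw [hσ]
      dsimp only
      rw [if_neg]
      rintro rfl
      exact hnW hi
    set D := Finset.univ.filter (fun x : (Fin n ⊕ Fin p) → Bool => addrFun n p g x ≠ h x)
      with hDdef
    have hSD : S.card ≤ 2 * D.card := by
      set φ : ((Fin n ⊕ Fin p) → Bool) → ((Fin n ⊕ Fin p) → Bool) :=
        fun x => if addrFun n p g x ≠ h x then x else σ x with hφ
      refine Finset.card_le_mul_card_image_of_maps_to (f := φ) ?_ 2 ?_
      · intro x hx
        by_cases hxD : addrFun n p g x ≠ h x
        · have hφx : φ x = x := if_pos hxD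
          rw [hDdef, Finset.mem_filter, hφx]
          exact ⟨Finset.mem_univ _, hxD⟩
        · push_neg at hxD
          have hφx : φ x = σ x := if_neg (by simp [hxD])
          have hne : addrFun n p g (σ x) ≠ h (σ x) := by
            rw [hσW x hx, ← hxD]
            exact hσflip x
          rw [hDdef, Finset.mem_filter, hφx]
          exact ⟨Finset.mem_univ _, hne⟩
      · intro d _
        have hsub2 : (S.filter (fun x => φ x = d)) ⊆ {d, σ d} := by
          intro x hx
          obtain ⟨hxS, hxφ⟩ := Finset.mem_filter.mp hx
          rw [hφ] at hxφ
          dsimp only at hxφ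
          by_cases hxD : addrFun n p g x ≠ h x
          · rw [if_pos hxD] at hxφ
            simp [hxφ]
          · rw [if_neg hxD] at hxφ
            have hx' : x = σ d := by rw [← hxφ, hσσ]
            simp [hx']
        refine le_trans (Finset.card_le_card hsub2) ?_
        refine le_trans (Finset.card_insert_le _ _) ?_
        simp
    -- assemble
    have hkpos : (0:ℝ) < (ℓ:ℝ) + p := by
      have : (1:ℝ) ≤ (ℓ:ℝ) := by exact_mod_cast hℓ
      positivity
    have hMle : ((∑ a ∈ J \ J', c a : ℕ) : ℝ) ≤ (p:ℝ) / ((ℓ:ℝ) + p) * 2 ^ p := by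
      rw [div_mul_eq_mul_div, le_div_iff₀ hkpos]
      exact hMbound
    have h2D : (S.card : ℝ) ≤ 2 * (D.card : ℝ) := by exact_mod_cast hSD
    have hS2 : (S.card : ℝ) = 2 ^ n * (B.card : ℝ) := by exact_mod_cast hScard
    have hgoal : ((ε - (p:ℝ) / ((ℓ:ℝ) + p)) / 2) * 2 ^ (n + p) ≤ (D.card : ℝ) := by
      rw [pow_add]
      have hpn : (0:ℝ) ≤ (2:ℝ) ^ n := by positivity
      nlinarith [mul_le_mul_of_nonneg_left hchain hpn, mul_le_mul_of_nonneg_left hMle hpn]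
    exact hgoal
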